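/- Let λ be an infinite well-ordered cardinal. If Cov(λ, λ⁺, 2^λ) holds — i.e., some set of cardinality 2^λ can be covered by a family of at most λ⁺ sets each of cardinality at most λ — then ℵ*(2^λ) = ℵ(2^λ) = λ⁺⁺. -/

import Mathlib

open Cardinal

universe u

/-- `SurjLeStar m n` (`m ≤* n`) : `m = 0` or there is a surjection from a set of
cardinality `n` onto a set of cardinality `m`. -/
def SurjLeStar (m n : Cardinal.{u}) : Prop :=
  m = 0 ∨ ∃ f : n.out → m.out, Function.Surjective f

/-- The Lindenbaum number `ℵ*(n)`: the least nonzero (initial ordinal, i.e.)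
cardinal onto which no set of cardinality `n` surjects. -/
noncomputable def lindenbaum (n : Cardinal.{u}) : Cardinal.{u} :=
  sInf {c : Cardinal.{u} | c ≠ 0 ∧ ¬ SurjLeStar c n}

/-- The Hartogs number `ℵ(n)`: the least (initial ordinal, i.e.) cardinal that does
not inject into a set of cardinality `n`. -/
noncomputable def hartogs (n : Cardinal.{u}) : Cardinal.{u} :=
  sInf {c : Cardinal.{u} | ¬ c ≤ n}

/-- `Cov l m n` : some set of cardinality `n` can be covered by a family indexed by a
set of cardinality at most `m` of sets each of cardinality at most `l`. -/
def Cov (l m n : Cardinal.{u}) : Prop :=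
  ∃ (X M : Type u) (A : M → Set X),
    #X = n ∧ #M ≤ m ∧ (∀ i, #(A i) ≤ l) ∧ ⋃ i, A i = Set.univ

lemma hartogs_eq (n : Cardinal.{u}) : hartogs n = Order.succ n := by
  unfold hartogs
  have h : {c : Cardinal.{u} | ¬ c ≤ n} = Set.Ici (Order.succ n) := by
    ext c
    simp [Order.succ_le_iff, not_le]
  rw [h, csInf_Ici]

lemma surjLeStar_iff (c n : Cardinal.{u}) (hc : c ≠ 0) : SurjLeStar c n ↔ c ≤ n := by
  constructor
  · rintro (rfl | ⟨f, hf⟩)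
    · exact absurd rfl hc
    · have := Cardinal.mk_le_of_surjective hf
      simpa [Cardinal.mk_out] using this
  · intro h
    right
    have hne : Nonempty c.out := by
      rw [← Cardinal.mk_ne_zero_iff, Cardinal.mk_out]; exact hc
    have h' : #c.out ≤ #n.out := by simpa [Cardinal.mk_out] using h
    obtain ⟨f⟩ := Cardinal.le_def _ _ |>.mp h'
    exact ⟨Function.invFun f, Function.invFun_surjective f.injective⟩

lemma lindenbaum_eq (n : Cardinal.{u}) : lindenbaum n = Order.succ n := by
  unfold lindenbaum
  have h : {c : Cardinal.{u} | c ≠ 0 ∧ ¬ SurjLeStar c n} = Set.Ici (Order.succ n) := by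
    ext c
    simp only [Set.mem_setOf_eq, Set.mem_Ici, Order.succ_le_iff]
    constructor
    · rintro ⟨hc, hs⟩
      rw [surjLeStar_iff c n hc] at hs
      exact lt_of_not_ge hs
    · intro h
      have hc : c ≠ 0 := by
        have : (0 : Cardinal) < c := lt_of_le_of_lt (zero_le : (0 : Cardinal.{u}) ≤ n) h
        exact this.ne'
      refine ⟨hc, ?_⟩
      rw [surjLeStar_iff c n hc]
      exact not_le_of_gt h
  rw [h, csInf_Ici]

/-- If `λ` is an infinite well-ordered cardinal and `Cov(λ, λ⁺, 2^λ)` holds, then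
`ℵ*(2^λ) = ℵ(2^λ) = λ⁺⁺`. -/
theorem lindenbaum_hartogs_of_cov (lam : Cardinal.{u}) (hlam : ℵ₀ ≤ lam)
    (hcov : Cov lam (Order.succ lam) ((2 : Cardinal.{u}) ^ lam)) :
    lindenbaum ((2 : Cardinal.{u}) ^ lam) = Order.succ (Order.succ lam) ∧
      hartogs ((2 : Cardinal.{u}) ^ lam) = Order.succ (Order.succ lam) := by
  obtain ⟨X, M, A, hX, hM, hA, hcover⟩ := hcov
  have h1 : (2 : Cardinal.{u}) ^ lam ≤ Order.succ lam := by
    have hle : #X ≤ #M * lam := by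
      calc #X = #(⋃ i, A i) := by rw [hcover, Cardinal.mk_univ]
        _ ≤ Cardinal.sum (fun i => #(A i)) := Cardinal.mk_iUnion_le_sum_mk
        _ ≤ Cardinal.sum (fun _ : M => lam) := Cardinal.sum_le_sum _ _ hA
        _ = #M * lam := by simp
    have hmul : #M * lam ≤ Order.succ lam * lam :=
      mul_le_mul_left hM lam
    have hsucc : Order.succ lam * lam = Order.succ lam := by
      rw [Cardinal.mul_eq_max (hlam.trans (Order.le_succ lam)) hlam]
      exact max_eq_left (Order.le_succ lam)
    rw [← hX]
    exact hle.trans (hmul.trans_eq hsucc)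
  have h2 : Order.succ lam ≤ (2 : Cardinal.{u}) ^ lam :=
    Order.succ_le_iff.mpr (Cardinal.cantor lam)
  have hn : (2 : Cardinal.{u}) ^ lam = Order.succ lam := le_antisymm h1 h2
  rw [lindenbaum_eq, hartogs_eq, hn]
  exact ⟨rfl, rfl⟩
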